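/- Let n ≥ 1, let A : ℝ → M_n(ℝ) be continuous, and let f : ℝ → M_n(ℝ) be differentiable with f′(t) = f(t)·A(t) − A(t)·f(t) for all t ∈ ℝ. Then the characteristic polynomial of f(t) equals the characteristic polynomial of f(0) for all t ∈ ℝ; in particular the spectrum of f(t) is constant in t. -/

import Mathlib

open Matrix

attribute [local instance] Matrix.normedAddCommGroup Matrix.normedSpace

/-- det as a continuous multilinear map in the rows. -/
noncomputable def detCM (n : ℕ) : ContinuousMultilinearMap ℝ (fun _ : Fin n => (Fin n → ℝ)) ℝ where
  toMultilinearMap := (Matrix.detRowAlternating : (Fin n → ℝ) [⋀^Fin n]→ₗ[ℝ] ℝ).toMultilinearMap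
  cont := by
    have : Continuous fun v : Matrix (Fin n) (Fin n) ℝ => v.det :=
      Continuous.matrix_det continuous_id
    exact this

lemma sum_det_updateRow {n : ℕ} (M N : Matrix (Fin n) (Fin n) ℝ) :
    ∑ i, (M.updateRow i (N i)).det = Matrix.trace (N * adjugate M) := by
  have h : ∀ i : Fin n, (M.updateRow i (N i)).det = (N * adjugate M) i i := by
    intro i
    rw [← cramer_transpose_apply, cramer_eq_adjugate_mulVec, ← adjugate_transpose]
    simp [Matrix.mulVec, Matrix.mul_apply, dotProduct, mul_comm]
  simp [Matrix.trace, h, Matrix.diag]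

lemma hasDerivAt_det {n : ℕ} {g : ℝ → Matrix (Fin n) (Fin n) ℝ}
    {g' : Matrix (Fin n) (Fin n) ℝ} {t : ℝ} (hg : HasDerivAt g g' t) :
    HasDerivAt (fun s => (g s).det) (Matrix.trace (g' * adjugate (g t))) t := by
  have rows : ∀ i, HasDerivAt (fun s => g s i) (g' i) t := fun i =>
    (ContinuousLinearMap.proj (R := ℝ) (φ := fun _ : Fin n => (Fin n → ℝ))
      i).hasFDerivAt.comp_hasDerivAt t hg
  have h1 := HasFDerivAt.multilinear_comp (detCM n)
      (g := fun i s => g s i)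
      (g' := fun i => ContinuousLinearMap.smulRight (1 : ℝ →L[ℝ] ℝ) (g' i)) (x := t)
      (fun i => (rows i).hasFDerivAt)
  have h2 := h1.hasDerivAt
  simp only [ContinuousLinearMap.coe_sum', Finset.sum_apply, ContinuousLinearMap.coe_comp',
    Function.comp_apply, ContinuousLinearMap.smulRight_apply, ContinuousLinearMap.one_apply,
    one_smul] at h2
  rw [← sum_det_updateRow]
  convert h2 using 1 <;> rfl

lemma eval_charpoly' {n : ℕ} (M : Matrix (Fin n) (Fin n) ℝ) (x : ℝ) :
    (M.charpoly).eval x = (x • (1 : Matrix (Fin n) (Fin n) ℝ) - M).det := by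
  rw [Matrix.charpoly, ← Polynomial.coe_evalRingHom, RingHom.map_det]
  congr 1
  ext i j
  by_cases h : i = j <;> simp [charmatrix_apply, Matrix.one_apply, h, Matrix.diagonal_apply]

theorem stmt_18 (n : ℕ) (hn : 1 ≤ n) (A : ℝ → Matrix (Fin n) (Fin n) ℝ)
    (hA : Continuous A) (f : ℝ → Matrix (Fin n) (Fin n) ℝ)
    (hf : ∀ t : ℝ, HasDerivAt f (f t * A t - A t * f t) t) :
    ∀ t : ℝ, (f t).charpoly = (f 0).charpoly := by
  intro t
  apply Polynomial.funext
  intro x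
  rw [eval_charpoly', eval_charpoly']
  set g : ℝ → Matrix (Fin n) (Fin n) ℝ := fun s => x • 1 - f s with hgdef
  have hg : ∀ s, HasDerivAt g (g s * A s - A s * g s) s := by
    intro s
    have h1 : HasDerivAt g (-(f s * A s - A s * f s)) s := (hf s).const_sub _
    convert h1 using 1
    simp only [hgdef, sub_mul, mul_sub, Matrix.smul_mul, Matrix.mul_smul, one_mul, mul_one]
    abel
  have hzero : ∀ s, HasDerivAt (fun u => (g u).det) 0 s := by
    intro s
    have h2 := hasDerivAt_det (hg s)
    convert h2 using 1
    rw [sub_mul, Matrix.trace_sub, Matrix.trace_mul_cycle (g s) (A s) (adjugate (g s)),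
      adjugate_mul, mul_assoc, mul_adjugate, Matrix.smul_mul, Matrix.mul_smul, one_mul,
      mul_one, sub_self]
  exact is_const_of_deriv_eq_zero (fun s => (hzero s).differentiableAt)
    (fun s => (hzero s).deriv) t 0
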